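/- The Euler class e_{A,f} of a finite-dimensional commutative Frobenius algebra (A, f) over a field of characteristic 0 is nilpotent if and only if e_{A,f}² = 0. -/

import Mathlib

/-- The Euler class of a finite-dimensional commutative Frobenius algebra over a field
of characteristic 0 is nilpotent iff its square vanishes. -/
theorem euler_class_nilpotent_iff_sq_zero (K A : Type) [Field K] [CharZero K]
    [CommRing A] [Algebra K A] [FiniteDimensional K A]
    (f : A →ₗ[K] K)
    (hf : ∀ a : A, (∀ b : A, f (a * b) = 0) → a = 0)
    (ι : Type) [Fintype ι] [DecidableEq ι] (e : Module.Basis ι K A) (d : ι → A)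
    (hd : ∀ i j, f (e i * d j) = if i = j then (1 : K) else 0) :
    IsNilpotent (∑ i, e i * d i) ↔ (∑ i, e i * d i) * (∑ i, e i * d i) = 0 := by
  set E : A := ∑ i, e i * d i with hE
  constructor
  · intro hnil
    -- repr formula: e.repr x i = f (x * d i)
    have hrepr : ∀ (x : A) (i : ι), f (x * d i) = e.repr x i := by
      intro x i
      conv_lhs => rw [← e.sum_repr x]
      rw [Finset.sum_mul, map_sum]
      rw [Finset.sum_eq_single i]
      · rw [smul_mul_assoc, map_smul, hd, if_pos rfl, smul_eq_mul, mul_one]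
      · intro j _ hj
        rw [smul_mul_assoc, map_smul, hd, if_neg hj, smul_eq_mul, mul_zero]
      · intro h; exact absurd (Finset.mem_univ i) h
    -- trace of multiplication by ν equals f (ν * E)
    have htr : ∀ ν : A, LinearMap.trace K A (LinearMap.mulLeft K ν) = f (ν * E) := by
      intro ν
      rw [LinearMap.trace_eq_matrix_trace K e, Matrix.trace]
      have : ∀ i, (LinearMap.toMatrix e e (LinearMap.mulLeft K ν)) i i
          = f (ν * e i * d i) := by
        intro i
        rw [LinearMap.toMatrix_apply, LinearMap.mulLeft_apply, hrepr]
      simp only [Matrix.diag, this]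
      rw [hE, Finset.mul_sum, map_sum]
      exact Finset.sum_congr rfl fun i _ => by rw [mul_assoc]
    apply hf
    intro b
    have hnil' : IsNilpotent (LinearMap.mulLeft K (E * b)) := by
      obtain ⟨n, hn⟩ := ((Commute.all E b).isNilpotent_mul_right hnil)
      exact ⟨n, by rw [LinearMap.pow_mulLeft, hn, LinearMap.mulLeft_zero_eq_zero]⟩
    have := (LinearMap.isNilpotent_trace_of_isNilpotent hnil').eq_zero
    rw [htr (E * b)] at this
    rw [show E * E * b = E * b * E by ring]
    exact this
  · intro h
    exact ⟨2, by rw [pow_two]; exact h⟩
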